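/- Let d ≥ 1, α, β ∈ ℕ^d and z, w ∈ ℂ^d. Then the integral π^{−d} ∫_{ℂ^d} w₁^α · (w̄₁)^β · e^{−(z−w₁, w−w₁)} dλ(w₁) converges absolutely and equals Σ_{γ ≤ α, γ ≤ β} C(α,γ) C(β,γ) γ! · z^{α−γ} · (w̄)^{β−γ}. In particular (α = β = 0): π^{−d} ∫_{ℂ^d} e^{−(z−w₁, w−w₁)} dλ(w₁) = 1. -/

import Mathlib

open Finset MeasureTheory

noncomputable section

/-- Size of a multi-index: `|α| = α₁ + ⋯ + α_d`. -/
def msize {d : ℕ} (α : Fin d → ℕ) : ℕ := ∑ i, α i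

/-- Factorial of a multi-index: `α! = ∏ᵢ αᵢ!`. -/
def mfact {d : ℕ} (α : Fin d → ℕ) : ℕ := ∏ i, Nat.factorial (α i)

/-- Binomial coefficient of multi-indices: `C(α,γ) = ∏ᵢ choose(αᵢ,γᵢ)`. -/
def mchoose {d : ℕ} (α γ : Fin d → ℕ) : ℕ := ∏ i, Nat.choose (α i) (γ i)

/-- Monomial `z^α = ∏ᵢ zᵢ^{αᵢ}` on `ℂ^d`. -/
def mpow {d : ℕ} (z : Fin d → ℂ) (α : Fin d → ℕ) : ℂ := ∏ i, z i ^ α i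

/-- The Hermitian pairing `(z,w) = Σⱼ zⱼ conj(wⱼ)` on `ℂ^d`. -/
def herm {d : ℕ} (z w : Fin d → ℂ) : ℂ := ∑ i, z i * (starRingEnd ℂ) (w i)

section Aux19
open Filter Complex Topology


/-- auxiliary one-dimensional sum -/
def S19 (p q : ℂ) (a b : ℕ) : ℂ :=
  ∑ c ∈ Finset.Iic a, (a.choose c : ℂ) * (b.choose c : ℂ) * (c.factorial : ℂ) * p ^ (a - c) * q ^ (b - c)

lemma Iic_eq_range (n : ℕ) : Finset.Iic n = Finset.range (n+1) := by
  ext c; simp [Nat.lt_succ_iff]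

lemma S19_zero_left (p q : ℂ) (b : ℕ) : S19 p q 0 b = q ^ b := by
  simp [S19, Iic_eq_range]

lemma choose_succ_mul (b c : ℕ) : (b.choose (c+1) * (c+1) : ℕ) = b * (b-1).choose c := by
  cases b with
  | zero => simp
  | succ b' => rw [← Nat.add_one_mul_choose_eq]; simp

lemma S19_succ_left (p q : ℂ) (a b : ℕ) :
    S19 p q (a+1) b = p * S19 p q a b + (b : ℂ) * S19 p q a (b-1) := by
  have key : ∀ c : ℕ, ((b.choose (c+1) : ℂ) * ((c+1).factorial : ℂ))
      = (b : ℂ) * ((b-1).choose c : ℂ) * (c.factorial : ℂ) := by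
    intro c
    have := choose_succ_mul b c
    have h2 : (c+1).factorial = (c+1) * c.factorial := Nat.factorial_succ c
    push_cast [h2]
    have : ((b.choose (c+1) : ℂ) * (c+1)) = (b : ℂ) * ((b-1).choose c : ℂ) := by
      exact_mod_cast congrArg (Nat.cast : ℕ → ℂ) (choose_succ_mul b c)
    calc (b.choose (c+1) : ℂ) * ((c+1) * c.factorial)
        = ((b.choose (c+1) : ℂ) * (c+1)) * c.factorial := by ring
      _ = (b : ℂ) * ((b-1).choose c : ℂ) * (c.factorial : ℂ) := by rw [this]
  rw [show S19 p q (a+1) b = ∑ c ∈ Finset.range (a+1+1), (((a+1).choose c : ℂ) * (b.choose c : ℂ) * (c.factorial : ℂ) * p ^ (a+1-c) * q ^ (b-c)) from by rw [S19, Iic_eq_range]]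
  rw [Finset.sum_range_succ' (fun c => ((a+1).choose c : ℂ) * (b.choose c : ℂ) * (c.factorial : ℂ) * p ^ (a+1-c) * q ^ (b-c)) (a+1)]
  have expand : ∀ c ∈ Finset.range (a+1),
      (((a+1).choose (c+1) : ℂ) * (b.choose (c+1) : ℂ) * ((c+1).factorial : ℂ) * p ^ (a+1-(c+1)) * q ^ (b-(c+1)))
      = ((a.choose (c+1) : ℂ) * (b.choose (c+1) : ℂ) * ((c+1).factorial : ℂ) * p ^ (a-c) * q ^ (b-(c+1)))
        + ((a.choose c : ℂ) * ((b:ℂ) * ((b-1).choose c : ℂ) * (c.factorial : ℂ)) * p ^ (a-c) * q ^ (b-(c+1))) := by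
    intro c _
    rw [Nat.choose_succ_succ a c]
    push_cast
    rw [← key c]
    ring
  rw [Finset.sum_congr rfl expand, Finset.sum_add_distrib]
  -- first piece + the c = 0 term equals p * S19 p q a b
  have h1 : (∑ c ∈ Finset.range (a+1), ((a.choose (c+1) : ℂ) * (b.choose (c+1) : ℂ) * ((c+1).factorial : ℂ) * p ^ (a-c) * q ^ (b-(c+1))))
      + (((a+1).choose 0 : ℂ) * (b.choose 0 : ℂ) * ((0).factorial : ℂ) * p ^ (a+1-0) * q ^ (b-0))
      = p * S19 p q a b := by
    have : p * S19 p q a b = ∑ c ∈ Finset.range (a+1+1),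
        ((a.choose c : ℂ) * (b.choose c : ℂ) * (c.factorial : ℂ) * p ^ (a+1-c) * q ^ (b-c)) := by
      rw [Finset.sum_range_succ]
      simp only [Nat.choose_succ_self, Nat.cast_zero, zero_mul, mul_zero, zero_mul, add_zero]
      rw [S19, Iic_eq_range, Finset.mul_sum]
      refine Finset.sum_congr rfl (fun c hc => ?_)
      have hc' : c ≤ a := by simpa [Nat.lt_succ_iff] using hc
      have : a + 1 - c = (a - c) + 1 := by omega
      rw [this, pow_succ]
      ring
    rw [this, Finset.sum_range_succ' _ (a+1)]
    congr 1
    · refine Finset.sum_congr rfl (fun c hc => ?_)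
      have : a + 1 - (c+1) = a - c := by omega
      rw [this]
    · simp
  -- second piece equals b * S19 p q a (b-1)
  have h2 : (∑ c ∈ Finset.range (a+1), ((a.choose c : ℂ) * ((b:ℂ) * ((b-1).choose c : ℂ) * (c.factorial : ℂ)) * p ^ (a-c) * q ^ (b-(c+1))))
      = (b:ℂ) * S19 p q a (b-1) := by
    rw [S19, Iic_eq_range, Finset.mul_sum]
    refine Finset.sum_congr rfl (fun c hc => ?_)
    have : b - (c+1) = b - 1 - c := by omega
    rw [this]; ring
  linear_combination h1 + h2


/-- bound profile -/
def Phi19 (c : ℝ) (t : ℝ) : ℝ := Real.exp (c * |t| - t ^ 2)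

lemma Phi19_pos (c t : ℝ) : 0 < Phi19 c t := Real.exp_pos _

lemma integrable_exp_linear_sq (c : ℝ) :
    Integrable (fun t : ℝ => Real.exp (c * t - t ^ 2)) := by
  have h := (integrable_cexp_quadratic (b := 1) (by norm_num) (c : ℂ) 0).norm
  refine h.congr (Filter.Eventually.of_forall fun t => ?_)
  simp only [Complex.norm_exp]
  congr 1
  simp [Complex.add_re, Complex.mul_re, Complex.ofReal_re, Complex.ofReal_im,
    Complex.sq_norm, ← Complex.ofReal_pow]
  ring

lemma integrable_Phi19 (c : ℝ) : Integrable (Phi19 c) := by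
  have h1 := integrable_exp_linear_sq c
  have h2 := integrable_exp_linear_sq (-c)
  refine (h1.add h2).mono' ?_ (Filter.Eventually.of_forall fun t => ?_)
  · exact (Real.continuous_exp.comp (by continuity)).aestronglyMeasurable
  · rw [Real.norm_eq_abs, abs_of_pos (Phi19_pos c t)]
    rcases le_or_gt 0 t with ht | ht
    · have : Phi19 c t = Real.exp (c * t - t ^ 2) := by rw [Phi19, _root_.abs_of_nonneg ht]
      rw [this]
      have := (Real.exp_pos (-c * t - t ^ 2)).le
      simp only [Pi.add_apply]; linarith
    · have : Phi19 c t = Real.exp (-c * t - t ^ 2) := by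
        rw [Phi19, _root_.abs_of_neg ht]; ring_nf
      rw [this]
      have := (Real.exp_pos (c * t - t ^ 2)).le
      simp only [Pi.add_apply]; linarith

lemma Phi19_tendsto_atTop (c : ℝ) : Tendsto (Phi19 c) atTop (𝓝 0) := by
  apply squeeze_zero' (Filter.Eventually.of_forall fun t => (Phi19_pos c t).le)
    (g := fun t => Real.exp (-t))
  · filter_upwards [Filter.eventually_ge_atTop (c + 1), Filter.eventually_ge_atTop 0]
      with t ht ht0
    rw [Phi19, _root_.abs_of_nonneg ht0]
    apply Real.exp_le_exp.2
    nlinarith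
  · exact Real.tendsto_exp_atBot.comp tendsto_neg_atTop_atBot

lemma Phi19_neg (c t : ℝ) : Phi19 c (-t) = Phi19 c t := by
  simp [Phi19]

lemma Phi19_tendsto_atBot (c : ℝ) : Tendsto (Phi19 c) atBot (𝓝 0) := by
  have := (Phi19_tendsto_atTop c).comp tendsto_neg_atBot_atTop
  refine this.congr fun t => ?_
  exact Phi19_neg c t

lemma pow_le_factorial_mul_exp {r : ℝ} (hr : 0 ≤ r) (k : ℕ) :
    r ^ k ≤ (k.factorial : ℝ) * Real.exp r := by
  have h1 : r ^ k / k.factorial ≤ Real.exp r := by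
    calc r ^ k / k.factorial
        ≤ ∑ i ∈ Finset.range (k + 1), r ^ i / i.factorial := by
          exact Finset.single_le_sum (f := fun i => r ^ i / (i.factorial : ℝ))
            (fun i _ => by positivity) (Finset.self_mem_range_succ k)
      _ ≤ Real.exp r := Real.sum_le_exp_of_nonneg hr _
  have hk : (0 : ℝ) < k.factorial := by positivity
  calc r ^ k = (k.factorial : ℝ) * (r ^ k / k.factorial) := by field_simp
    _ ≤ (k.factorial : ℝ) * Real.exp r := by
        exact mul_le_mul_of_nonneg_left h1 hk.le

/-- one-dimensional kernel -/
def fK (p q : ℂ) (a b : ℕ) (u : ℂ) : ℂ :=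
  u ^ a * ((starRingEnd ℂ) u) ^ b *
    Complex.exp (p * (starRingEnd ℂ) u + q * u - u * (starRingEnd ℂ) u)

lemma continuous_fK (p q : ℂ) (a b : ℕ) : Continuous (fK p q a b) := by
  unfold fK
  exact ((continuous_pow a).mul ((Complex.continuous_conj).pow b)).mul
    (Complex.continuous_exp.comp (((continuous_const.mul Complex.continuous_conj).add
      (continuous_const.mul continuous_id)).sub
      (continuous_id.mul Complex.continuous_conj)))

lemma norm_fK_le (p q : ℂ) (a b : ℕ) (u : ℂ) :
    ‖fK p q a b u‖ ≤ ((a + b).factorial : ℝ) *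
      (Phi19 (‖p‖ + ‖q‖ + 1) u.re * Phi19 (‖p‖ + ‖q‖ + 1) u.im) := by
  set c : ℝ := ‖p‖ + ‖q‖ + 1 with hc
  have habs : ‖fK p q a b u‖ = ‖u‖ ^ (a + b) *
      Real.exp ((p * (starRingEnd ℂ) u + q * u - u * (starRingEnd ℂ) u).re) := by
    rw [fK, norm_mul, norm_mul, norm_pow, norm_pow,
      RCLike.norm_conj, Complex.norm_exp, pow_add]
  have hre : (p * (starRingEnd ℂ) u + q * u - u * (starRingEnd ℂ) u).re
      ≤ ‖p‖ * ‖u‖ + ‖q‖ * ‖u‖ - ‖u‖ ^ 2 := by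
    have h1 : (p * (starRingEnd ℂ) u).re ≤ ‖p‖ * ‖u‖ := by
      calc (p * (starRingEnd ℂ) u).re ≤ ‖p * (starRingEnd ℂ) u‖ := Complex.re_le_norm _
        _ = ‖p‖ * ‖u‖ := by rw [norm_mul, RCLike.norm_conj]
    have h2 : (q * u).re ≤ ‖q‖ * ‖u‖ := by
      calc (q * u).re ≤ ‖q * u‖ := Complex.re_le_norm _
        _ = ‖q‖ * ‖u‖ := norm_mul _ _
    have h3 : (u * (starRingEnd ℂ) u).re = ‖u‖ ^ 2 := by
      rw [Complex.mul_conj]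
      simp [Complex.normSq_eq_norm_sq, ← Complex.ofReal_pow]
    simp only [Complex.sub_re, Complex.add_re]
    rw [h3]
    linarith
  have hpow : ‖u‖ ^ (a + b) ≤ ((a + b).factorial : ℝ) * Real.exp ‖u‖ :=
    pow_le_factorial_mul_exp (norm_nonneg u) _
  calc ‖fK p q a b u‖
      ≤ ‖u‖ ^ (a + b) * Real.exp ((‖p‖ + ‖q‖) * ‖u‖ - ‖u‖ ^ 2) := by
        rw [habs]
        apply mul_le_mul_of_nonneg_left _ (by positivity)
        apply Real.exp_le_exp.2
        nlinarith
    _ ≤ ((a + b).factorial : ℝ) * Real.exp ‖u‖ * Real.exp ((‖p‖ + ‖q‖) * ‖u‖ - ‖u‖ ^ 2) := by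
        apply mul_le_mul_of_nonneg_right hpow (Real.exp_pos _).le
    _ = ((a + b).factorial : ℝ) * Real.exp (c * ‖u‖ - ‖u‖ ^ 2) := by
        rw [mul_assoc, ← Real.exp_add, hc]; ring_nf
    _ ≤ ((a + b).factorial : ℝ) *
        (Phi19 c u.re * Phi19 c u.im) := by
        apply mul_le_mul_of_nonneg_left _ (by positivity)
        rw [Phi19, Phi19, ← Real.exp_add]
        apply Real.exp_le_exp.2
        have hub : ‖u‖ ≤ |u.re| + |u.im| := Complex.norm_le_abs_re_add_abs_im u
        have hsq : ‖u‖ ^ 2 = u.re ^ 2 + u.im ^ 2 := by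
          rw [Complex.sq_norm, Complex.normSq_apply]; ring
        have hcpos : (0 : ℝ) < c := by positivity
        nlinarith
  
lemma integrable_PhiProd (c : ℝ) :
    Integrable (fun u : ℂ => Phi19 c u.re * Phi19 c u.im) := by
  have h : Integrable (fun v : ℝ × ℝ => Phi19 c v.1 * Phi19 c v.2) := by
    rw [MeasureTheory.Measure.volume_eq_prod]
    exact (integrable_Phi19 c).mul_prod (integrable_Phi19 c)
  have := (Complex.volume_preserving_equiv_real_prod.integrable_comp_emb
    Complex.measurableEquivRealProd.measurableEmbedding
    (g := fun v : ℝ × ℝ => Phi19 c v.1 * Phi19 c v.2)).2 h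
  exact this

lemma integrable_fK (p q : ℂ) (a b : ℕ) : Integrable (fK p q a b) := by
  refine (((integrable_PhiProd (‖p‖ + ‖q‖ + 1)).const_mul ((a + b).factorial : ℝ)).mono'
    (continuous_fK p q a b).aestronglyMeasurable
    (Filter.Eventually.of_forall fun u => ?_))
  exact norm_fK_le p q a b u




lemma conj_line (x y : ℝ) : (starRingEnd ℂ) ((x : ℂ) + y * I) = (x : ℂ) - y * I := by
  simp [map_add, map_mul, Complex.conj_ofReal, Complex.conj_I]
  ring

lemma fK_line (p q : ℂ) (a b : ℕ) (x y : ℝ) :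
    fK p q a b ((x : ℂ) + y * I) =
      ((x:ℂ) + y*I) ^ a * ((x:ℂ) - y*I) ^ b *
        Complex.exp (p * ((x:ℂ) - y*I) + q * ((x:ℂ) + y*I) - ((x:ℂ) + y*I) * ((x:ℂ) - y*I)) := by
  rw [fK, conj_line]

lemma norm_fK_line_le (p q : ℂ) (a b : ℕ) (x y : ℝ) :
    ‖fK p q a b ((x:ℂ) + y*I)‖ ≤ (((a+b).factorial : ℝ) * Phi19 (‖p‖+‖q‖+1) y) *
      Phi19 (‖p‖+‖q‖+1) x := by
  have h := norm_fK_le p q a b ((x:ℂ) + y*I)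
  have hre : ((x:ℂ) + y*I).re = x := by simp
  have him : ((x:ℂ) + y*I).im = y := by simp
  rw [hre, him] at h
  exact h.trans (le_of_eq (by ring))

lemma integrable_fK_slice_x (p q : ℂ) (a b : ℕ) (y : ℝ) :
    Integrable (fun x : ℝ => fK p q a b ((x:ℂ) + y*I)) := by
  refine ((integrable_Phi19 (‖p‖+‖q‖+1)).const_mul
    (((a+b).factorial : ℝ) * Phi19 (‖p‖+‖q‖+1) y)).mono'
      ?_ (Filter.Eventually.of_forall fun x => norm_fK_line_le p q a b x y)
  exact ((continuous_fK p q a b).comp (by continuity)).aestronglyMeasurable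

lemma integrable_fK_slice_y (p q : ℂ) (a b : ℕ) (x : ℝ) :
    Integrable (fun y : ℝ => fK p q a b ((x:ℂ) + y*I)) := by
  refine ((integrable_Phi19 (‖p‖+‖q‖+1)).const_mul
    (((a+b).factorial : ℝ) * Phi19 (‖p‖+‖q‖+1) x)).mono'
      ?_ (Filter.Eventually.of_forall fun y => ?_)
  · exact ((continuous_fK p q a b).comp (by continuity)).aestronglyMeasurable
  · exact (norm_fK_le p q a b _).trans (le_of_eq (by
      have hre : ((x:ℂ) + y*I).re = x := by simp
      have him : ((x:ℂ) + y*I).im = y := by simp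
      rw [hre, him]; ring))

lemma tendsto_fK_slice_x (p q : ℂ) (a b : ℕ) (y : ℝ) (l : Filter ℝ)
    (hl : Tendsto (Phi19 (‖p‖+‖q‖+1)) l (𝓝 0)) :
    Tendsto (fun x : ℝ => fK p q a b ((x:ℂ) + y*I)) l (𝓝 0) := by
  exact squeeze_zero_norm (fun x => norm_fK_line_le p q a b x y)
    (by simpa using hl.const_mul (((a+b).factorial : ℝ) * Phi19 (‖p‖+‖q‖+1) y))

lemma tendsto_fK_slice_y (p q : ℂ) (a b : ℕ) (x : ℝ) (l : Filter ℝ)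
    (hl : Tendsto (Phi19 (‖p‖+‖q‖+1)) l (𝓝 0)) :
    Tendsto (fun y : ℝ => fK p q a b ((x:ℂ) + y*I)) l (𝓝 0) := by
  have hb : ∀ y : ℝ, ‖fK p q a b ((x:ℂ) + y*I)‖ ≤
      (((a+b).factorial : ℝ) * Phi19 (‖p‖+‖q‖+1) x) * Phi19 (‖p‖+‖q‖+1) y := by
    intro y
    refine (norm_fK_le p q a b _).trans (le_of_eq ?_)
    have hre : ((x:ℂ) + y*I).re = x := by simp
    have him : ((x:ℂ) + y*I).im = y := by simp
    rw [hre, him]; ring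
  exact squeeze_zero_norm hb
    (by simpa using hl.const_mul (((a+b).factorial : ℝ) * Phi19 (‖p‖+‖q‖+1) x))

/-- x-direction derivative of `fK` -/
def DxK (p q : ℂ) (a b : ℕ) : ℂ → ℂ := fun u =>
  (a:ℂ) * fK p q (a-1) b u + (b:ℂ) * fK p q a (b-1) u + (p+q) * fK p q a b u
    - fK p q (a+1) b u - fK p q a (b+1) u

/-- y-direction derivative of `fK` -/
def DyK (p q : ℂ) (a b : ℕ) : ℂ → ℂ := fun u =>
  Complex.I * ((a:ℂ) * fK p q (a-1) b u - (b:ℂ) * fK p q a (b-1) u + (q-p) * fK p q a b u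
    + fK p q (a+1) b u - fK p q a (b+1) u)

lemma hasDerivAt_ofReal' (x : ℝ) : HasDerivAt (fun x : ℝ => (x:ℂ)) 1 x := by
  simpa using (hasDerivAt_id x).ofReal_comp

lemma HasDerivAt.cpow_nat' {f : ℝ → ℂ} {f' : ℂ} {x : ℝ} (hf : HasDerivAt f f' x) (n : ℕ) :
    HasDerivAt (fun x => f x ^ n) ((n : ℂ) * f x ^ (n - 1) * f') x := by
  induction n with
  | zero => simpa using hasDerivAt_const x (1 : ℂ)
  | succ n ih =>
    have h2 := ih.mul hf
    have hfun : (fun x => f x ^ (n + 1)) = fun x => f x ^ n * f x :=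
      funext fun x => pow_succ _ _
    rw [hfun]
    refine h2.congr_deriv ?_
    rcases Nat.eq_zero_or_pos n with hn | hn
    · subst hn; simp
    · have hpow : f x ^ (n - 1) * f x = f x ^ n := by
        rw [← pow_succ]
        congr 1
        omega
      have hcast : ((n + 1 : ℕ) : ℂ) = (n : ℂ) + 1 := by push_cast; ring
      have hsub : (n + 1) - 1 = n := by omega
      rw [hsub, hcast, ← hpow]
      ring

lemma hasDerivAt_fK_x (p q : ℂ) (a b : ℕ) (y x : ℝ) :
    HasDerivAt (fun x : ℝ => fK p q a b ((x:ℂ) + y*I)) (DxK p q a b ((x:ℂ) + y*I)) x := by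
  have hu : HasDerivAt (fun x : ℝ => (x:ℂ) + y*I) 1 x := (hasDerivAt_ofReal' x).add_const _
  have hv : HasDerivAt (fun x : ℝ => (x:ℂ) - y*I) 1 x := (hasDerivAt_ofReal' x).sub_const _
  have hE : HasDerivAt (fun x : ℝ => p * ((x:ℂ) - y*I) + q * ((x:ℂ) + y*I)
      - ((x:ℂ) + y*I) * ((x:ℂ) - y*I))
      (p * 1 + q * 1 - (1 * ((x:ℂ) - y*I) + ((x:ℂ) + y*I) * 1)) x :=
    ((hv.const_mul p).add (hu.const_mul q)).sub (hu.mul hv)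
  have h1 : HasDerivAt (fun x : ℝ => ((x:ℂ) + y*I) ^ a)
      ((a:ℂ) * ((x:ℂ) + y*I) ^ (a-1) * 1) x := hu.cpow_nat' a
  have h2 : HasDerivAt (fun x : ℝ => ((x:ℂ) - y*I) ^ b)
      ((b:ℂ) * ((x:ℂ) - y*I) ^ (b-1) * 1) x := hv.cpow_nat' b
  have hexp := hE.cexp
  have hmain := (h1.mul h2).mul hexp
  have hfun : (fun x : ℝ => fK p q a b ((x:ℂ) + y*I)) = fun x : ℝ =>
      ((x:ℂ) + y*I) ^ a * ((x:ℂ) - y*I) ^ b *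
        Complex.exp (p * ((x:ℂ) - y*I) + q * ((x:ℂ) + y*I) - ((x:ℂ) + y*I) * ((x:ℂ) - y*I)) :=
    funext fun x => fK_line p q a b x y
  rw [hfun]
  refine hmain.congr_deriv ?_
  simp only [DxK, fK_line, Pi.mul_apply]
  ring

lemma hasDerivAt_fK_y (p q : ℂ) (a b : ℕ) (x y : ℝ) :
    HasDerivAt (fun y : ℝ => fK p q a b ((x:ℂ) + y*I)) (DyK p q a b ((x:ℂ) + y*I)) y := by
  have hu : HasDerivAt (fun y : ℝ => (x:ℂ) + y*I) (1 * I) y :=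
    ((hasDerivAt_ofReal' y).mul_const I).const_add _
  have hv : HasDerivAt (fun y : ℝ => (x:ℂ) - y*I) (-(1 * I)) y :=
    ((hasDerivAt_ofReal' y).mul_const I).const_sub _
  have hE : HasDerivAt (fun y : ℝ => p * ((x:ℂ) - y*I) + q * ((x:ℂ) + y*I)
      - ((x:ℂ) + y*I) * ((x:ℂ) - y*I))
      (p * (-(1 * I)) + q * (1 * I) - ((1 * I) * ((x:ℂ) - y*I) + ((x:ℂ) + y*I) * (-(1 * I)))) y :=
    ((hv.const_mul p).add (hu.const_mul q)).sub (hu.mul hv)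
  have h1 : HasDerivAt (fun y : ℝ => ((x:ℂ) + y*I) ^ a)
      ((a:ℂ) * ((x:ℂ) + y*I) ^ (a-1) * (1 * I)) y := hu.cpow_nat' a
  have h2 : HasDerivAt (fun y : ℝ => ((x:ℂ) - y*I) ^ b)
      ((b:ℂ) * ((x:ℂ) - y*I) ^ (b-1) * (-(1 * I))) y := hv.cpow_nat' b
  have hexp := hE.cexp
  have hmain := (h1.mul h2).mul hexp
  have hfun : (fun y : ℝ => fK p q a b ((x:ℂ) + y*I)) = fun y : ℝ =>
      ((x:ℂ) + y*I) ^ a * ((x:ℂ) - y*I) ^ b *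
        Complex.exp (p * ((x:ℂ) - y*I) + q * ((x:ℂ) + y*I) - ((x:ℂ) + y*I) * ((x:ℂ) - y*I)) :=
    funext fun y => fK_line p q a b x y
  rw [hfun]
  refine hmain.congr_deriv ?_
  simp only [DyK, fK_line, Pi.mul_apply]
  ring

lemma integral_deriv_eq_zero19 {f f' : ℝ → ℂ} (hderiv : ∀ x, HasDerivAt f (f' x) x)
    (hint : Integrable f') (htop : Tendsto f atTop (𝓝 0)) (hbot : Tendsto f atBot (𝓝 0)) :
    ∫ x : ℝ, f' x = 0 := by
  have h1 : ∫ x in Set.Iic (0:ℝ), f' x = f 0 - 0 :=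
    MeasureTheory.integral_Iic_of_hasDerivAt_of_tendsto
      (hderiv 0).continuousAt.continuousWithinAt (fun x _ => hderiv x) hint.integrableOn hbot
  have h2 : ∫ x in Set.Ioi (0:ℝ), f' x = 0 - f 0 :=
    MeasureTheory.integral_Ioi_of_hasDerivAt_of_tendsto
      (hderiv 0).continuousAt.continuousWithinAt (fun x _ => hderiv x) hint.integrableOn htop
  have h3 := intervalIntegral.integral_Iic_add_Ioi (μ := volume) (b := (0:ℝ))
    hint.integrableOn hint.integrableOn
  rw [← h3, h1, h2]
  ring

lemma integrable_DxK (p q : ℂ) (a b : ℕ) : Integrable (DxK p q a b) := by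
  unfold DxK
  exact (((((integrable_fK p q (a-1) b).const_mul _).add
    ((integrable_fK p q a (b-1)).const_mul _)).add
    ((integrable_fK p q a b).const_mul _)).sub (integrable_fK p q (a+1) b)).sub
    (integrable_fK p q a (b+1))

lemma integrable_DyK (p q : ℂ) (a b : ℕ) : Integrable (DyK p q a b) := by
  unfold DyK
  exact (((((((integrable_fK p q (a-1) b).const_mul _).sub
    ((integrable_fK p q a (b-1)).const_mul _)).add
    ((integrable_fK p q a b).const_mul _)).add (integrable_fK p q (a+1) b)).sub
    (integrable_fK p q a (b+1))).const_mul _)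

lemma complex_integral_eq_iterated {g : ℂ → ℂ} (hg : Integrable g) :
    ∫ u : ℂ, g u = ∫ x : ℝ, ∫ y : ℝ, g ((x:ℂ) + y*I) := by
  have hsymm : ∀ v : ℝ × ℝ, (Complex.measurableEquivRealProd.symm v : ℂ) = (v.1:ℂ) + v.2*I := by
    intro v
    rw [Complex.measurableEquivRealProd_symm_apply, Complex.mk_eq_add_mul_I]
  have h1 : ∫ u : ℂ, g u = ∫ v : ℝ × ℝ, g ((v.1:ℂ) + v.2*I) := by
    rw [← MeasurePreserving.integral_comp'
      (Complex.volume_preserving_equiv_real_prod.symm Complex.measurableEquivRealProd) g]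
    exact integral_congr_ae (Filter.Eventually.of_forall fun v =>
      show g (Complex.measurableEquivRealProd.symm v) = _ from congrArg g (hsymm v))
  have h2 : Integrable (fun v : ℝ × ℝ => g ((v.1:ℂ) + v.2*I)) := by
    have := (MeasurePreserving.integrable_comp_emb
      (Complex.volume_preserving_equiv_real_prod.symm Complex.measurableEquivRealProd)
      (Complex.measurableEquivRealProd.symm.measurableEmbedding) (g := g)).2 hg
    refine this.congr (Filter.Eventually.of_forall fun v =>
      show g (Complex.measurableEquivRealProd.symm v) = _ from congrArg g (hsymm v))
  rw [h1, MeasureTheory.Measure.volume_eq_prod]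
  rw [MeasureTheory.Measure.volume_eq_prod] at h2
  exact integral_prod _ h2

lemma complex_integral_eq_iterated_symm {g : ℂ → ℂ} (hg : Integrable g) :
    ∫ u : ℂ, g u = ∫ y : ℝ, ∫ x : ℝ, g ((x:ℂ) + y*I) := by
  have hsymm : ∀ v : ℝ × ℝ, (Complex.measurableEquivRealProd.symm v : ℂ) = (v.1:ℂ) + v.2*I := by
    intro v
    rw [Complex.measurableEquivRealProd_symm_apply, Complex.mk_eq_add_mul_I]
  have h1 : ∫ u : ℂ, g u = ∫ v : ℝ × ℝ, g ((v.1:ℂ) + v.2*I) := by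
    rw [← MeasurePreserving.integral_comp'
      (Complex.volume_preserving_equiv_real_prod.symm Complex.measurableEquivRealProd) g]
    exact integral_congr_ae (Filter.Eventually.of_forall fun v =>
      show g (Complex.measurableEquivRealProd.symm v) = _ from congrArg g (hsymm v))
  have h2 : Integrable (fun v : ℝ × ℝ => g ((v.1:ℂ) + v.2*I)) := by
    have := (MeasurePreserving.integrable_comp_emb
      (Complex.volume_preserving_equiv_real_prod.symm Complex.measurableEquivRealProd)
      (Complex.measurableEquivRealProd.symm.measurableEmbedding) (g := g)).2 hg
    refine this.congr (Filter.Eventually.of_forall fun v =>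
      show g (Complex.measurableEquivRealProd.symm v) = _ from congrArg g (hsymm v))
  rw [h1, MeasureTheory.Measure.volume_eq_prod]
  rw [MeasureTheory.Measure.volume_eq_prod] at h2
  exact integral_prod_symm _ h2

lemma integral_DxK_eq_zero (p q : ℂ) (a b : ℕ) : ∫ u : ℂ, DxK p q a b u = 0 := by
  rw [complex_integral_eq_iterated_symm (integrable_DxK p q a b)]
  have hinner : ∀ y : ℝ, ∫ x : ℝ, DxK p q a b ((x:ℂ) + y*I) = 0 := by
    intro y
    apply integral_deriv_eq_zero19 (f := fun x : ℝ => fK p q a b ((x:ℂ) + y*I))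
      (hasDerivAt_fK_x p q a b y)
    · simp only [DxK]
      exact (((((integrable_fK_slice_x p q (a-1) b y).const_mul _).add
        ((integrable_fK_slice_x p q a (b-1) y).const_mul _)).add
        ((integrable_fK_slice_x p q a b y).const_mul _)).sub
        (integrable_fK_slice_x p q (a+1) b y)).sub (integrable_fK_slice_x p q a (b+1) y)
    · exact tendsto_fK_slice_x p q a b y atTop (Phi19_tendsto_atTop _)
    · exact tendsto_fK_slice_x p q a b y atBot (Phi19_tendsto_atBot _)
  simp only [hinner, integral_zero]

lemma integral_DyK_eq_zero (p q : ℂ) (a b : ℕ) : ∫ u : ℂ, DyK p q a b u = 0 := by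
  rw [complex_integral_eq_iterated (integrable_DyK p q a b)]
  have hinner : ∀ x : ℝ, ∫ y : ℝ, DyK p q a b ((x:ℂ) + y*I) = 0 := by
    intro x
    apply integral_deriv_eq_zero19 (f := fun y : ℝ => fK p q a b ((x:ℂ) + y*I))
      (hasDerivAt_fK_y p q a b x)
    · simp only [DyK]
      exact ((((((integrable_fK_slice_y p q (a-1) b x).const_mul _).sub
        ((integrable_fK_slice_y p q a (b-1) x).const_mul _)).add
        ((integrable_fK_slice_y p q a b x).const_mul _)).add
        (integrable_fK_slice_y p q (a+1) b x)).sub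
        (integrable_fK_slice_y p q a (b+1) x)).const_mul _
    · exact tendsto_fK_slice_y p q a b x atTop (Phi19_tendsto_atTop _)
    · exact tendsto_fK_slice_y p q a b x atBot (Phi19_tendsto_atBot _)
  simp only [hinner, integral_zero]




lemma integral_fK_zero_zero (p q : ℂ) :
    ∫ u : ℂ, fK p q 0 0 u = (Real.pi : ℂ) * Complex.exp (p * q) := by
  rw [complex_integral_eq_iterated (integrable_fK p q 0 0)]
  have hinner : ∀ x : ℝ, ∫ y : ℝ, fK p q 0 0 ((x:ℂ) + y*I)
      = ((Real.pi : ℂ) / -(-1)) ^ (1/2 : ℂ) *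
        Complex.exp ((-(x:ℂ)^2 + (p+q)*(x:ℂ)) - (I*(q-p))^2 / (4 * (-1))) := by
    intro x
    have heq : ∀ y : ℝ, fK p q 0 0 ((x:ℂ) + y*I)
        = Complex.exp ((-1:ℂ) * (y:ℂ)^2 + (I*(q-p)) * (y:ℂ) + (-(x:ℂ)^2 + (p+q)*(x:ℂ))) := by
      intro y
      rw [fK_line]
      simp only [pow_zero, one_mul]
      congr 1
      linear_combination (y:ℂ)^2 * Complex.I_sq
    simp_rw [heq]
    exact integral_cexp_quadratic (by norm_num : (-1:ℂ).re < 0) _ _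
  simp_rw [hinner]
  rw [MeasureTheory.integral_const_mul]
  have heq2 : ∀ x : ℝ, Complex.exp ((-(x:ℂ)^2 + (p+q)*(x:ℂ)) - (I*(q-p))^2 / (4 * (-1)))
      = Complex.exp ((-1:ℂ) * (x:ℂ)^2 + (p+q) * (x:ℂ) + ((I*(q-p))^2 / 4)) := by
    intro x
    congr 1
    ring
  simp_rw [heq2]
  rw [integral_cexp_quadratic (by norm_num : (-1:ℂ).re < 0)]
  have hpi : ((Real.pi : ℂ) / -(-1)) = (Real.pi : ℂ) := by norm_num
  rw [hpi]
  have hpine : (Real.pi : ℂ) ≠ 0 := Complex.ofReal_ne_zero.mpr Real.pi_ne_zero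
  have hhalf : ((Real.pi : ℂ)) ^ (1/2 : ℂ) * ((Real.pi : ℂ)) ^ (1/2 : ℂ) = (Real.pi : ℂ) := by
    rw [← Complex.cpow_add _ _ hpine]
    norm_num
  have hexp : Complex.exp ((I*(q-p))^2 / 4 - (p+q)^2 / (4 * (-1))) = Complex.exp (p * q) := by
    congr 1
    linear_combination ((q-p)^2/4) * Complex.I_sq
  rw [← mul_assoc, hhalf, hexp]

lemma K_rec (p q : ℂ) (a b : ℕ) :
    ((∫ u : ℂ, fK p q (a+1) b u) = p * (∫ u : ℂ, fK p q a b u)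
        + (b:ℂ) * (∫ u : ℂ, fK p q a (b-1) u))
    ∧ ((∫ u : ℂ, fK p q a (b+1) u) = q * (∫ u : ℂ, fK p q a b u)
        + (a:ℂ) * (∫ u : ℂ, fK p q (a-1) b u)) := by
  have hx := integral_DxK_eq_zero p q a b
  have hy := integral_DyK_eq_zero p q a b
  have i1 := integrable_fK p q (a-1) b
  have i2 := integrable_fK p q a (b-1)
  have i3 := integrable_fK p q a b
  have i4 := integrable_fK p q (a+1) b
  have i5 := integrable_fK p q a (b+1)
  have j1 : Integrable (fun u : ℂ => (a:ℂ) * fK p q (a-1) b u) := i1.const_mul _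
  have j2 : Integrable (fun u : ℂ => (b:ℂ) * fK p q a (b-1) u) := i2.const_mul _
  have j3x : Integrable (fun u : ℂ => (p+q) * fK p q a b u) := i3.const_mul _
  have j3y : Integrable (fun u : ℂ => (q-p) * fK p q a b u) := i3.const_mul _
  have jA : Integrable (fun u : ℂ => (a:ℂ) * fK p q (a-1) b u + (b:ℂ) * fK p q a (b-1) u) :=
    j1.add j2
  have jB : Integrable (fun u : ℂ => (a:ℂ) * fK p q (a-1) b u + (b:ℂ) * fK p q a (b-1) u
      + (p+q) * fK p q a b u) := jA.add j3x
  have jC : Integrable (fun u : ℂ => (a:ℂ) * fK p q (a-1) b u + (b:ℂ) * fK p q a (b-1) u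
      + (p+q) * fK p q a b u - fK p q (a+1) b u) := jB.sub i4
  have jA' : Integrable (fun u : ℂ => (a:ℂ) * fK p q (a-1) b u - (b:ℂ) * fK p q a (b-1) u) :=
    j1.sub j2
  have jB' : Integrable (fun u : ℂ => (a:ℂ) * fK p q (a-1) b u - (b:ℂ) * fK p q a (b-1) u
      + (q-p) * fK p q a b u) := jA'.add j3y
  have jC' : Integrable (fun u : ℂ => (a:ℂ) * fK p q (a-1) b u - (b:ℂ) * fK p q a (b-1) u
      + (q-p) * fK p q a b u + fK p q (a+1) b u) := jB'.add i4
  have ex : ∫ u : ℂ, DxK p q a b u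
      = (a:ℂ) * (∫ u, fK p q (a-1) b u) + (b:ℂ) * (∫ u, fK p q a (b-1) u)
        + (p+q) * (∫ u, fK p q a b u) - (∫ u, fK p q (a+1) b u)
        - (∫ u, fK p q a (b+1) u) := by
    unfold DxK
    rw [integral_sub jC i5, integral_sub jB i4, integral_add jA j3x, integral_add j1 j2,
      MeasureTheory.integral_const_mul, MeasureTheory.integral_const_mul,
      MeasureTheory.integral_const_mul]
  have ey : ∫ u : ℂ, DyK p q a b u
      = Complex.I * ((a:ℂ) * (∫ u, fK p q (a-1) b u) - (b:ℂ) * (∫ u, fK p q a (b-1) u)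
        + (q-p) * (∫ u, fK p q a b u) + (∫ u, fK p q (a+1) b u)
        - (∫ u, fK p q a (b+1) u)) := by
    unfold DyK
    rw [MeasureTheory.integral_const_mul,
      integral_sub jC' i5, integral_add jB' i4, integral_add jA' j3y, integral_sub j1 j2,
      MeasureTheory.integral_const_mul, MeasureTheory.integral_const_mul,
      MeasureTheory.integral_const_mul]
  rw [ex] at hx
  rw [ey] at hy
  have hy' : (a:ℂ) * (∫ u, fK p q (a-1) b u) - (b:ℂ) * (∫ u, fK p q a (b-1) u)
      + (q-p) * (∫ u, fK p q a b u) + (∫ u, fK p q (a+1) b u)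
      - (∫ u, fK p q a (b+1) u) = 0 := by
    rcases mul_eq_zero.mp hy with h | h
    · exact absurd h Complex.I_ne_zero
    · exact h
  constructor
  · linear_combination (hy' - hx) / 2
  · linear_combination -(hx + hy') / 2

lemma K_closed (p q : ℂ) : ∀ a b : ℕ,
    (∫ u : ℂ, fK p q a b u) = (Real.pi : ℂ) * Complex.exp (p * q) * S19 p q a b := by
  intro a
  induction a with
  | zero =>
    intro b
    induction b with
    | zero =>
      rw [integral_fK_zero_zero, S19_zero_left]
      simp
    | succ b ih =>
      have h := (K_rec p q 0 b).2
      rw [h, ih]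
      simp only [Nat.cast_zero, zero_mul, add_zero, S19_zero_left]
      ring
  | succ a ih =>
    intro b
    have h := (K_rec p q a b).1
    rw [h, ih b, ih (b-1), S19_succ_left]
    ring

lemma onedim19 (ζ ω : ℂ) (a b : ℕ) :
    Integrable (fun u : ℂ => u^a * ((starRingEnd ℂ) u)^b *
        Complex.exp (-((ζ - u) * (starRingEnd ℂ) (ω - u))))
    ∧ ∫ u : ℂ, u^a * ((starRingEnd ℂ) u)^b *
        Complex.exp (-((ζ - u) * (starRingEnd ℂ) (ω - u)))
      = (Real.pi : ℂ) * S19 ζ ((starRingEnd ℂ) ω) a b := by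
  set q := (starRingEnd ℂ) ω with hq
  have hpt : ∀ u : ℂ, u^a * ((starRingEnd ℂ) u)^b *
      Complex.exp (-((ζ - u) * (starRingEnd ℂ) (ω - u)))
      = Complex.exp (-(ζ * q)) * fK ζ q a b u := by
    intro u
    rw [fK]
    rw [show -((ζ - u) * (starRingEnd ℂ) (ω - u))
      = -(ζ*q) + (ζ * (starRingEnd ℂ) u + q * u - u * (starRingEnd ℂ) u) from by
        rw [map_sub]; ring]
    rw [Complex.exp_add]
    ring
  constructor
  · exact ((integrable_fK ζ q a b).const_mul _).congr
      (Filter.Eventually.of_forall fun u => (hpt u).symm)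
  · calc ∫ u : ℂ, u^a * ((starRingEnd ℂ) u)^b *
          Complex.exp (-((ζ - u) * (starRingEnd ℂ) (ω - u)))
        = ∫ u : ℂ, Complex.exp (-(ζ * q)) * fK ζ q a b u :=
          integral_congr_ae (Filter.Eventually.of_forall hpt)
      _ = Complex.exp (-(ζ * q)) * ∫ u : ℂ, fK ζ q a b u :=
          MeasureTheory.integral_const_mul _ _
      _ = (Real.pi : ℂ) * S19 ζ q a b := by
          rw [K_closed ζ q a b,
            show Complex.exp (-(ζ*q)) * ((Real.pi:ℂ) * Complex.exp (ζ*q) * S19 ζ q a b)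
              = (Real.pi:ℂ) * (Complex.exp (-(ζ*q)) * Complex.exp (ζ*q)) * S19 ζ q a b from by
                ring,
            ← Complex.exp_add]
          simp


end Aux19

/-- the Gaussian integral identity
`π^{−d} ∫ w₁^α w̄₁^β e^{−(z−w₁, w−w₁)} dλ(w₁)
  = Σ_{γ ≤ α, γ ≤ β} C(α,γ) C(β,γ) γ! z^{α−γ} w̄^{β−γ}`,
the integral being absolutely convergent; in particular, for `α = β = 0`,
`π^{−d} ∫ e^{−(z−w₁, w−w₁)} dλ(w₁) = 1`. -/
theorem stmt_19 (d : ℕ) (hd : 1 ≤ d) (α β : Fin d → ℕ) (z w : Fin d → ℂ) :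
    Integrable (fun w₁ : Fin d → ℂ =>
        mpow w₁ α * mpow (fun i => (starRingEnd ℂ) (w₁ i)) β *
          Complex.exp (-(herm (z - w₁) (w - w₁)))) ∧
      ((Real.pi : ℂ) ^ d)⁻¹ *
          ∫ w₁ : Fin d → ℂ,
            mpow w₁ α * mpow (fun i => (starRingEnd ℂ) (w₁ i)) β *
              Complex.exp (-(herm (z - w₁) (w - w₁))) =
        ∑ γ ∈ Finset.Iic α ∩ Finset.Iic β,
          (mchoose α γ : ℂ) * (mchoose β γ : ℂ) * (mfact γ : ℂ) *
            mpow z (α - γ) * mpow (fun i => (starRingEnd ℂ) (w i)) (β - γ) := by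
  classical
  set g : Fin d → ℂ → ℂ := fun i u => u ^ (α i) * ((starRingEnd ℂ) u) ^ (β i) *
    Complex.exp (-((z i - u) * (starRingEnd ℂ) (w i - u))) with hg
  have hpt : ∀ w₁ : Fin d → ℂ,
      mpow w₁ α * mpow (fun i => (starRingEnd ℂ) (w₁ i)) β *
        Complex.exp (-(herm (z - w₁) (w - w₁))) = ∏ i, g i (w₁ i) := by
    intro w₁
    have h1 : herm (z - w₁) (w - w₁) = ∑ i, (z i - w₁ i) * (starRingEnd ℂ) (w i - w₁ i) := by
      rw [herm]
      exact Finset.sum_congr rfl fun i _ => by simp [Pi.sub_apply]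
    rw [mpow, mpow, h1, ← Finset.sum_neg_distrib, Complex.exp_sum,
      ← Finset.prod_mul_distrib, ← Finset.prod_mul_distrib]
  have hone : ∀ i : Fin d, Integrable (g i) ∧
      ∫ u : ℂ, g i u = (Real.pi : ℂ) * S19 (z i) ((starRingEnd ℂ) (w i)) (α i) (β i) :=
    fun i => onedim19 (z i) (w i) (α i) (β i)
  have hint : Integrable (fun w₁ : Fin d → ℂ =>
      mpow w₁ α * mpow (fun i => (starRingEnd ℂ) (w₁ i)) β *
        Complex.exp (-(herm (z - w₁) (w - w₁)))) := by
    have h := MeasureTheory.Integrable.fintype_prod (f := g) (fun i => (hone i).1)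
    exact h.congr (Filter.Eventually.of_forall fun w₁ => (hpt w₁).symm)
  refine ⟨hint, ?_⟩
  have hpine : (Real.pi : ℂ) ≠ 0 := Complex.ofReal_ne_zero.mpr Real.pi_ne_zero
  have hcalc : (∫ w₁ : Fin d → ℂ,
      mpow w₁ α * mpow (fun i => (starRingEnd ℂ) (w₁ i)) β *
        Complex.exp (-(herm (z - w₁) (w - w₁))))
      = (Real.pi : ℂ) ^ d * ∏ i, S19 (z i) ((starRingEnd ℂ) (w i)) (α i) (β i) := by
    calc (∫ w₁ : Fin d → ℂ,
        mpow w₁ α * mpow (fun i => (starRingEnd ℂ) (w₁ i)) β *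
          Complex.exp (-(herm (z - w₁) (w - w₁))))
        = ∫ w₁ : Fin d → ℂ, ∏ i, g i (w₁ i) :=
          integral_congr_ae (Filter.Eventually.of_forall hpt)
      _ = ∏ i, ∫ u : ℂ, g i u := MeasureTheory.integral_fintype_prod_eq_prod (ι := Fin d) (f := g)
      _ = ∏ i, ((Real.pi : ℂ) * S19 (z i) ((starRingEnd ℂ) (w i)) (α i) (β i)) :=
          Finset.prod_congr rfl fun i _ => (hone i).2
      _ = (Real.pi : ℂ) ^ d * ∏ i, S19 (z i) ((starRingEnd ℂ) (w i)) (α i) (β i) := by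
          rw [Finset.prod_mul_distrib, Finset.prod_const, Finset.card_univ, Fintype.card_fin]
  rw [hcalc, ← mul_assoc, inv_mul_cancel₀ (pow_ne_zero d hpine), one_mul]
  -- now prove the product of sums equals the stated sum
  have hset : Fintype.piFinset (fun i => Finset.Iic (α i)) = Finset.Iic α := by
    ext γ
    simp [Fintype.mem_piFinset, Finset.mem_Iic, Pi.le_def]
  calc ∏ i, S19 (z i) ((starRingEnd ℂ) (w i)) (α i) (β i)
      = ∑ γ ∈ Fintype.piFinset (fun i => Finset.Iic (α i)), ∏ i,
          (((α i).choose (γ i) : ℂ) * ((β i).choose (γ i) : ℂ) * ((γ i).factorial : ℂ) *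
            (z i) ^ (α i - γ i) * ((starRingEnd ℂ) (w i)) ^ (β i - γ i)) := by
        simp only [S19]
        rw [Finset.prod_univ_sum]
    _ = ∑ γ ∈ Finset.Iic α ∩ Finset.Iic β, ∏ i,
          (((α i).choose (γ i) : ℂ) * ((β i).choose (γ i) : ℂ) * ((γ i).factorial : ℂ) *
            (z i) ^ (α i - γ i) * ((starRingEnd ℂ) (w i)) ^ (β i - γ i)) := by
        rw [hset]
        refine (Finset.sum_subset Finset.inter_subset_left ?_).symm
        intro γ hγα hγ
        have hnle : ¬ γ ≤ β := by
          intro hle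
          exact hγ (Finset.mem_inter.mpr ⟨hγα, Finset.mem_Iic.mpr hle⟩)
        obtain ⟨i, hi⟩ := not_forall.mp (fun h => hnle (Pi.le_def.mpr h))
        have hlt : β i < γ i := lt_of_not_ge hi
        apply Finset.prod_eq_zero (Finset.mem_univ i)
        simp [Nat.choose_eq_zero_of_lt hlt]
    _ = ∑ γ ∈ Finset.Iic α ∩ Finset.Iic β,
          (mchoose α γ : ℂ) * (mchoose β γ : ℂ) * (mfact γ : ℂ) *
            mpow z (α - γ) * mpow (fun i => (starRingEnd ℂ) (w i)) (β - γ) := by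
        refine Finset.sum_congr rfl fun γ _ => ?_
        simp only [mchoose, mfact, mpow, Nat.cast_prod, Pi.sub_apply,
          ← Finset.prod_mul_distrib]


end
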